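/- For every even-signed permutation w in the group S^D_n, the cost of w (computed with factorizations into transpositions of S^D_n) is at least half of its total displacement: $(w) ≥ tvd(w)/2. -/

import Mathlib

/-- A signed permutation in the hyperoctahedral group `S^B_n`: a bijection of `ℤ`
that satisfies `w(i) = −w(−i)` and fixes every integer outside `{±1,…,±n}`
(this models the bijections of `{±1,…,±n}` with that symmetry). -/
def IsSignedPerm (n : ℕ) (w : Equiv.Perm ℤ) : Prop :=
  (∀ i : ℤ, w (-i) = - w i) ∧ (∀ i : ℤ, (n : ℤ) < |i| → w i = i)

/-- An even-signed permutation in `S^D_n`: a signed permutation `w` such that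
`#{i ∈ {1,…,n} : w(i) < 0}` is even. -/
def IsEvenSignedPerm (n : ℕ) (w : Equiv.Perm ℤ) : Prop :=
  IsSignedPerm n w ∧
  Even (((Finset.Icc (1 : ℤ) (n : ℤ)).filter (fun i => w i < 0)).card)

/-- Total displacement: `tvd(w) = ∑_{i=1}^n |w(i) − i|`. -/
noncomputable def tvdB (n : ℕ) (w : Equiv.Perm ℤ) : ℕ :=
  ∑ i ∈ Finset.Icc (1 : ℤ) (n : ℤ), (w i - i).natAbs

/-- `j ∈ {1,…,n−1}` is a break of `w` if `w` maps `{±1,…,±j}` to itself. -/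
def IsBreak (w : Equiv.Perm ℤ) (j : ℕ) : Prop :=
  ∀ i : ℤ, |i| ≤ (j : ℤ) → |w i| ≤ (j : ℤ)

/-- A break `j` is even if `#{i ∈ {1,…,j} : w(i) < 0}` is even. -/
def IsEvenBreak (w : Equiv.Perm ℤ) (j : ℕ) : Prop :=
  IsBreak w j ∧
  Even (((Finset.Icc (1 : ℤ) (j : ℤ)).filter (fun i => w i < 0)).card)

/-- The number of type `B` blocks: `bl^B(w) = 1 + #{breaks of w}`. -/
noncomputable def blB (n : ℕ) (w : Equiv.Perm ℤ) : ℕ :=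
  1 + Set.ncard {j : ℕ | 1 ≤ j ∧ j < n ∧ IsBreak w j}

/-- The number of type `D` blocks: `bl^D(w) = 1 + #{even breaks of w}`. -/
noncomputable def blD (n : ℕ) (w : Equiv.Perm ℤ) : ℕ :=
  1 + Set.ncard {j : ℕ | 1 ≤ j ∧ j < n ∧ IsEvenBreak w j}

/-- `t` is a transposition of `S^D_n` of cost `c`: `t = (i j)(−i −j)` for distinct
`i, j ∈ {±1,…,±n}` with `j ≠ ±i`, of cost `|i − j|`. -/
def IsDTransp (n : ℕ) (t : Equiv.Perm ℤ) (c : ℕ) : Prop :=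
  ∃ i j : ℤ, i ≠ 0 ∧ j ≠ 0 ∧ |i| ≤ (n : ℤ) ∧ |j| ≤ (n : ℤ) ∧ i ≠ j ∧ j ≠ -i ∧
    t = Equiv.swap i j * Equiv.swap (-i) (-j) ∧ c = (i - j).natAbs

/-- The cost of `w ∈ S^D_n`: the minimum of `$(t₁) + ⋯ + $(t_k)` over all factorizations
`w = t₁ ⋯ t_k` into transpositions of `S^D_n`. -/
noncomputable def costD (n : ℕ) (w : Equiv.Perm ℤ) : ℕ :=
  sInf {c : ℕ | ∃ L : List (Equiv.Perm ℤ × ℕ),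
    (∀ p ∈ L, IsDTransp n p.1 p.2) ∧
    (L.map Prod.fst).prod = w ∧ c = (L.map Prod.snd).sum}


section Aux

open Finset

private lemma dt_apply (i j : ℤ) (hi : i ≠ 0) (hj : j ≠ 0) (hij : i ≠ j) (hji : j ≠ -i) (k : ℤ) :
    (Equiv.swap i j * Equiv.swap (-i) (-j)) k =
      if k = i then j else if k = j then i else if k = -i then -j else if k = -j then -i else k := by
  simp only [Equiv.Perm.mul_apply, Equiv.swap_apply_def]
  split_ifs <;> omega

private lemma dt_signed {n : ℕ} {t : Equiv.Perm ℤ} {c : ℕ} (h : IsDTransp n t c) :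
    IsSignedPerm n t := by
  obtain ⟨i, j, hi, hj, hin, hjn, hij, hji, ht, hc⟩ := h
  subst ht
  constructor
  · intro k
    rw [dt_apply i j hi hj hij hji, dt_apply i j hi hj hij hji]
    split_ifs <;> omega
  · intro k hk
    rw [dt_apply i j hi hj hij hji]
    rw [abs_le] at hin hjn
    rw [lt_abs] at hk
    split_ifs <;> omega

private lemma dt_sq {n : ℕ} {t : Equiv.Perm ℤ} {c : ℕ} (h : IsDTransp n t c) : t * t = 1 := by
  obtain ⟨i, j, hi, hj, hin, hjn, hij, hji, ht, hc⟩ := h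
  ext k
  simp only [Equiv.Perm.mul_apply, Equiv.Perm.one_apply]
  rw [ht, dt_apply i j hi hj hij hji, dt_apply i j hi hj hij hji]
  split_ifs <;> omega

private lemma dt_mono {n : ℕ} {t : Equiv.Perm ℤ} {c : ℕ} (h : IsDTransp n t c) :
    IsDTransp (n + 1) t c := by
  obtain ⟨i, j, hi, hj, hin, hjn, hij, hji, ht, hc⟩ := h
  refine ⟨i, j, hi, hj, ?_, ?_, hij, hji, ht, hc⟩ <;> push_cast <;> omega

private lemma signed_one (n : ℕ) : IsSignedPerm n 1 := by
  constructor <;> intro i <;> simp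

private lemma signed_mul {n : ℕ} {u v : Equiv.Perm ℤ} (hu : IsSignedPerm n u)
    (hv : IsSignedPerm n v) : IsSignedPerm n (u * v) := by
  constructor
  · intro i
    simp only [Equiv.Perm.mul_apply, hv.1, hu.1]
  · intro i hi
    simp only [Equiv.Perm.mul_apply, hv.2 i hi, hu.2 i hi]

private lemma signed_zero {n : ℕ} {w : Equiv.Perm ℤ} (hw : IsSignedPerm n w) : w 0 = 0 := by
  have := hw.1 0
  simp at this
  omega

theorem Equiv.Perm.apply_inv_self {α : Type*} (f : Equiv.Perm α) (x : α) : f (f⁻¹ x) = x :=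
  f.apply_symm_apply x

theorem Equiv.Perm.inv_apply_self {α : Type*} (f : Equiv.Perm α) (x : α) : f⁻¹ (f x) = x :=
  f.symm_apply_apply x

private lemma signed_inv {n : ℕ} {w : Equiv.Perm ℤ} (hw : IsSignedPerm n w) :
    IsSignedPerm n w⁻¹ := by
  constructor
  · intro i
    apply w.injective
    rw [Equiv.Perm.apply_inv_self, hw.1, Equiv.Perm.apply_inv_self]
  · intro i hi
    have := hw.2 i hi
    calc w⁻¹ i = w⁻¹ (w i) := by rw [this]
    _ = i := w.inv_apply_self i

private lemma signed_abs_le {n : ℕ} {w : Equiv.Perm ℤ} (hw : IsSignedPerm n w) {i : ℤ}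
    (hi : |i| ≤ (n : ℤ)) : |w i| ≤ (n : ℤ) := by
  by_contra h
  push_neg at h
  have h2 := hw.2 (w i) h
  have := w.injective h2
  rw [this] at h
  omega

private lemma signed_ne_zero {n : ℕ} {w : Equiv.Perm ℤ} (hw : IsSignedPerm n w) {i : ℤ}
    (hi : i ≠ 0) : w i ≠ 0 := by
  intro h
  exact hi (w.injective (h.trans (signed_zero hw).symm))

/-- Reindexing sum over displaced values. -/
private lemma sum_reindex {n : ℕ} {u v : Equiv.Perm ℤ} (hu : IsSignedPerm n u)
    (hv : IsSignedPerm n v) :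
    ∑ x ∈ Finset.Icc (1 : ℤ) (n : ℤ), (u (v x) - v x).natAbs
      = ∑ m ∈ Finset.Icc (1 : ℤ) (n : ℤ), (u m - m).natAbs := by
  refine Finset.sum_nbij' (fun x => |v x|) (fun m => |v⁻¹ m|) ?_ ?_ ?_ ?_ ?_
  · intro a ha
    rw [Finset.mem_Icc] at ha ⊢
    have h1 : v a ≠ 0 := signed_ne_zero hv (by omega)
    have h2 : |v a| ≤ (n : ℤ) := signed_abs_le hv (by rw [abs_le]; omega)
    have h3 : 0 < |v a| := abs_pos.2 h1
    omega
  · intro a ha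
    rw [Finset.mem_Icc] at ha ⊢
    have h1 : v⁻¹ a ≠ 0 := signed_ne_zero (signed_inv hv) (by omega)
    have h2 : |v⁻¹ a| ≤ (n : ℤ) := signed_abs_le (signed_inv hv) (by rw [abs_le]; omega)
    have h3 : 0 < |v⁻¹ a| := abs_pos.2 h1
    omega
  · intro a ha
    rw [Finset.mem_Icc] at ha
    rcases le_or_gt 0 (v a) with h | h
    · rw [abs_of_nonneg h, Equiv.Perm.inv_apply_self, abs_of_nonneg (by omega)]
    · rw [abs_of_neg h]
      have : v⁻¹ (-(v a)) = - v⁻¹ (v a) := (signed_inv hv).1 (v a)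
      rw [this, Equiv.Perm.inv_apply_self, abs_neg, abs_of_nonneg (by omega)]
  · intro a ha
    rw [Finset.mem_Icc] at ha
    rcases le_or_gt 0 (v⁻¹ a) with h | h
    · rw [abs_of_nonneg h, Equiv.Perm.apply_inv_self, abs_of_nonneg (by omega)]
    · rw [abs_of_neg h]
      have : v (-(v⁻¹ a)) = - v (v⁻¹ a) := hv.1 (v⁻¹ a)
      rw [this, Equiv.Perm.apply_inv_self, abs_neg, abs_of_nonneg (by omega)]
  · intro a ha
    rcases le_or_gt 0 (v a) with h | h
    · rw [abs_of_nonneg h]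
    · rw [abs_of_neg h]
      have h1 : u (-(v a)) = - u (v a) := hu.1 (v a)
      rw [h1]
      omega

private lemma tvd_mul_le {n : ℕ} {u v : Equiv.Perm ℤ} (hu : IsSignedPerm n u)
    (hv : IsSignedPerm n v) : tvdB n (u * v) ≤ tvdB n u + tvdB n v := by
  unfold tvdB
  calc ∑ x ∈ Finset.Icc (1 : ℤ) (n : ℤ), ((u * v) x - x).natAbs
      ≤ ∑ x ∈ Finset.Icc (1 : ℤ) (n : ℤ), ((u (v x) - v x).natAbs + (v x - x).natAbs) := by
        apply Finset.sum_le_sum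
        intro x hx
        simp only [Equiv.Perm.mul_apply]
        omega
    _ = (∑ x ∈ Finset.Icc (1 : ℤ) (n : ℤ), (u (v x) - v x).natAbs)
        + ∑ x ∈ Finset.Icc (1 : ℤ) (n : ℤ), (v x - x).natAbs := Finset.sum_add_distrib
    _ = _ := by rw [sum_reindex hu hv]

private lemma dt_tvd {n : ℕ} {t : Equiv.Perm ℤ} {c : ℕ} (h : IsDTransp n t c) :
    tvdB n t ≤ 2 * c := by
  obtain ⟨i, j, hi, hj, hin, hjn, hij, hji, ht, hc⟩ := h
  have htap : ∀ k, t k =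
      if k = i then j else if k = j then i else if k = -i then -j else if k = -j then -i else k :=
    fun k => by rw [ht]; exact dt_apply i j hi hj hij hji k
  rw [abs_le] at hin hjn
  set p := |i| with hp
  set q := |j| with hq
  have hpq : p ≠ q := by
    intro h
    rcases abs_eq_abs.1 h with h' | h' <;> omega
  have hsub : ({p, q} : Finset ℤ) ⊆ Finset.Icc (1 : ℤ) (n : ℤ) := by
    intro x hx
    simp only [Finset.mem_insert, Finset.mem_singleton] at hx
    rw [Finset.mem_Icc]
    have h1 : 0 < p := abs_pos.2 hi
    have h2 : 0 < q := abs_pos.2 hj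
    have h3 : p ≤ (n : ℤ) := abs_le.2 hin
    have h4 : q ≤ (n : ℤ) := abs_le.2 hjn
    rcases hx with h | h <;> omega
  have hzero : ∀ x ∈ Finset.Icc (1 : ℤ) (n : ℤ), x ∉ ({p, q} : Finset ℤ) →
      (t x - x).natAbs = 0 := by
    intro x hx hnx
    simp only [Finset.mem_insert, Finset.mem_singleton, not_or] at hnx
    rw [Finset.mem_Icc] at hx
    have hxi : x ≠ i := by intro h; subst h; rcases abs_cases x with h | h <;> omega
    have hxj : x ≠ j := by intro h; subst h; rcases abs_cases x with h | h <;> omega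
    have hxi' : x ≠ -i := by intro h; rcases abs_cases i with h' | h' <;> omega
    have hxj' : x ≠ -j := by intro h; rcases abs_cases j with h' | h' <;> omega
    rw [htap]
    split_ifs <;> omega
  rw [tvdB, ← Finset.sum_subset hsub hzero, Finset.sum_pair hpq]
  have h1 : (t p - p).natAbs = c := by
    rw [htap]
    rcases abs_cases i with ⟨h, _⟩ | ⟨h, _⟩ <;> rw [hp, h] <;> split_ifs <;> omega
  have h2 : (t q - q).natAbs = c := by
    rw [htap]
    rcases abs_cases j with ⟨h, _⟩ | ⟨h, _⟩ <;> rw [hq, h] <;> split_ifs <;> omega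
  omega

/-- key parity lemma: multiplying by a D-transposition preserves parity of negatives. -/
private lemma dt_parity {n : ℕ} {t : Equiv.Perm ℤ} {c : ℕ} (ht : IsDTransp n t c)
    {w : Equiv.Perm ℤ} (hw : IsSignedPerm n w) :
    Even (((Finset.Icc (1 : ℤ) (n : ℤ)).filter (fun x => (w * t) x < 0)).card) ↔
    Even (((Finset.Icc (1 : ℤ) (n : ℤ)).filter (fun x => w x < 0)).card) := by
  classical
  set χ : ℤ → ZMod 2 := fun y => if y < 0 then 1 else 0 with hχ
  have hcard : ∀ P : ℤ → Prop, ∀ _ : DecidablePred P,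
      Even (((Finset.Icc (1 : ℤ) (n : ℤ)).filter (fun x => P x)).card) ↔
      ∑ x ∈ Finset.Icc (1 : ℤ) (n : ℤ), (if P x then (1 : ZMod 2) else 0) = 0 := by
    intro P _
    rw [← ZMod.natCast_eq_zero_iff_even, Finset.card_filter, Nat.cast_sum]
    have hc : (∑ x ∈ Finset.Icc (1 : ℤ) (n : ℤ), ((if P x then (1 : ℕ) else 0 : ℕ) : ZMod 2))
        = ∑ x ∈ Finset.Icc (1 : ℤ) (n : ℤ), (if P x then (1 : ZMod 2) else 0) :=
      Finset.sum_congr rfl (fun x _ => by split_ifs <;> simp)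
    rw [hc]
  rw [hcard _ _, hcard _ _]
  have hmain : ∑ x ∈ Finset.Icc (1 : ℤ) (n : ℤ), (if (w * t) x < 0 then (1 : ZMod 2) else 0)
      = ∑ x ∈ Finset.Icc (1 : ℤ) (n : ℤ), (if w x < 0 then (1 : ZMod 2) else 0) := by
    obtain ⟨i, j, hi, hj, hin, hjn, hij, hji, hteq, hc⟩ := ht
    have htap : ∀ k, t k =
        if k = i then j else if k = j then i else if k = -i then -j else if k = -j then -i
        else k := fun k => by rw [hteq]; exact dt_apply i j hi hj hij hji k
    rw [abs_le] at hin hjn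
    set p := |i| with hp
    set q := |j| with hq
    have hpq : p ≠ q := by
      intro h
      rcases abs_eq_abs.1 h with h' | h' <;> omega
    have h1p : 0 < p := abs_pos.2 hi
    have h1q : 0 < q := abs_pos.2 hj
    have h3 : p ≤ (n : ℤ) := abs_le.2 hin
    have h4 : q ≤ (n : ℤ) := abs_le.2 hjn
    have hsub : ({p, q} : Finset ℤ) ⊆ Finset.Icc (1 : ℤ) (n : ℤ) := by
      intro x hx
      simp only [Finset.mem_insert, Finset.mem_singleton] at hx
      rw [Finset.mem_Icc]
      rcases hx with h | h <;> omega
    have hneg : ∀ y : ℤ, y ≠ 0 →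
        (if w (-y) < 0 then (1 : ZMod 2) else 0) = (if w y < 0 then (1 : ZMod 2) else 0) + 1 := by
      intro y hy
      have h1 : w (-y) = - w y := hw.1 y
      have h2 : w y ≠ 0 := signed_ne_zero hw hy
      rw [h1]
      split_ifs with hA hB <;> first | omega | decide
    have hfix : ∀ x ∈ Finset.Icc (1 : ℤ) (n : ℤ) \ ({p, q} : Finset ℤ),
        (if (w * t) x < 0 then (1 : ZMod 2) else 0) = (if w x < 0 then (1 : ZMod 2) else 0) := by
      intro x hx
      rw [Finset.mem_sdiff, Finset.mem_Icc] at hx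
      obtain ⟨⟨ha1, ha2⟩, hb⟩ := hx
      simp only [Finset.mem_insert, Finset.mem_singleton, not_or] at hb
      have htx : t x = x := by
        rw [htap]
        have hxi : x ≠ i := by intro h; subst h; rcases abs_cases x with h | h <;> omega
        have hxj : x ≠ j := by intro h; subst h; rcases abs_cases x with h | h <;> omega
        have hxi' : x ≠ -i := by intro h; rcases abs_cases i with h' | h' <;> omega
        have hxj' : x ≠ -j := by intro h; rcases abs_cases j with h' | h' <;> omega
        split_ifs <;> omega
      simp only [Equiv.Perm.mul_apply, htx]
    have hpair : (if (w * t) p < 0 then (1 : ZMod 2) else 0)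
        + (if (w * t) q < 0 then (1 : ZMod 2) else 0)
        = (if w p < 0 then (1 : ZMod 2) else 0) + (if w q < 0 then (1 : ZMod 2) else 0) := by
      simp only [Equiv.Perm.mul_apply]
      rcases lt_or_gt_of_ne hi with hi' | hi' <;> rcases lt_or_gt_of_ne hj with hj' | hj'
      · -- i < 0, j < 0 : p = -i, q = -j, t p = q, t q = p
        have hpv : p = -i := abs_of_neg hi'
        have hqv : q = -j := abs_of_neg hj'
        have h1 : t p = q := by rw [htap]; split_ifs <;> omega
        have h2 : t q = p := by rw [htap]; split_ifs <;> omega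
        simp only [h1, h2]
        exact add_comm _ _
      · -- i < 0, j > 0 : p = -i, q = j, t p = -q, t q = -p
        have hpv : p = -i := abs_of_neg hi'
        have hqv : q = j := abs_of_pos hj'
        have h1 : t p = -q := by rw [htap]; split_ifs <;> omega
        have h2 : t q = -p := by rw [htap]; split_ifs <;> omega
        simp only [h1, h2]
        rw [hneg q (by omega), hneg p (by omega)]
        have : ∀ a b : ZMod 2, (a + 1) + (b + 1) = b + a := by decide
        exact this _ _
      · -- i > 0, j < 0
        have hpv : p = i := abs_of_pos hi'
        have hqv : q = -j := abs_of_neg hj'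
        have h1 : t p = -q := by rw [htap]; split_ifs <;> omega
        have h2 : t q = -p := by rw [htap]; split_ifs <;> omega
        simp only [h1, h2]
        rw [hneg q (by omega), hneg p (by omega)]
        have : ∀ a b : ZMod 2, (a + 1) + (b + 1) = b + a := by decide
        exact this _ _
      · -- i > 0, j > 0
        have hpv : p = i := abs_of_pos hi'
        have hqv : q = j := abs_of_pos hj'
        have h1 : t p = q := by rw [htap]; split_ifs <;> omega
        have h2 : t q = p := by rw [htap]; split_ifs <;> omega
        simp only [h1, h2]
        exact add_comm _ _
    calc ∑ x ∈ Finset.Icc (1 : ℤ) (n : ℤ), (if (w * t) x < 0 then (1 : ZMod 2) else 0)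
        = ∑ x ∈ Finset.Icc (1 : ℤ) (n : ℤ) \ ({p, q} : Finset ℤ),
            (if (w * t) x < 0 then (1 : ZMod 2) else 0)
          + ∑ x ∈ ({p, q} : Finset ℤ), (if (w * t) x < 0 then (1 : ZMod 2) else 0) :=
          (Finset.sum_sdiff hsub).symm
      _ = ∑ x ∈ Finset.Icc (1 : ℤ) (n : ℤ) \ ({p, q} : Finset ℤ),
            (if w x < 0 then (1 : ZMod 2) else 0)
          + ∑ x ∈ ({p, q} : Finset ℤ), (if w x < 0 then (1 : ZMod 2) else 0) := by
          rw [Finset.sum_congr rfl hfix, Finset.sum_pair hpq, Finset.sum_pair hpq, hpair]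
      _ = ∑ x ∈ Finset.Icc (1 : ℤ) (n : ℤ), (if w x < 0 then (1 : ZMod 2) else 0) :=
          Finset.sum_sdiff hsub
  rw [hmain]

private lemma even_mul_dt {n : ℕ} {w t : Equiv.Perm ℤ} {c : ℕ} (hw : IsEvenSignedPerm n w)
    (ht : IsDTransp n t c) : IsEvenSignedPerm n (w * t) := by
  refine ⟨signed_mul hw.1 (dt_signed ht), ?_⟩
  exact (dt_parity ht hw.1).2 hw.2

private lemma fact_tvd {n : ℕ} : ∀ L : List (Equiv.Perm ℤ × ℕ),
    (∀ p ∈ L, IsDTransp n p.1 p.2) →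
    IsSignedPerm n (L.map Prod.fst).prod ∧
      tvdB n (L.map Prod.fst).prod ≤ 2 * (L.map Prod.snd).sum := by
  intro L
  induction L with
  | nil =>
    intro _
    refine ⟨by simpa using signed_one n, ?_⟩
    simp only [List.map_nil, List.prod_nil, List.sum_nil]
    unfold tvdB
    simp
  | cons hd tl ih =>
    intro hL
    have hhd : IsDTransp n hd.1 hd.2 := hL hd (List.mem_cons_self)
    have htl := ih (fun p hp => hL p (List.mem_cons_of_mem hd hp))
    simp only [List.map_cons, List.prod_cons, List.sum_cons]
    constructor
    · exact signed_mul (dt_signed hhd) htl.1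
    · calc tvdB n (hd.1 * (tl.map Prod.fst).prod)
          ≤ tvdB n hd.1 + tvdB n (tl.map Prod.fst).prod := tvd_mul_le (dt_signed hhd) htl.1
        _ ≤ 2 * hd.2 + 2 * (tl.map Prod.snd).sum := Nat.add_le_add (dt_tvd hhd) htl.2
        _ = 2 * (hd.2 + (tl.map Prod.snd).sum) := by ring

private lemma fix_reduce {n : ℕ} {w : Equiv.Perm ℤ} (hw : IsEvenSignedPerm (n + 1) w)
    (hfix : w ((n : ℤ) + 1) = (n : ℤ) + 1) : IsEvenSignedPerm n w := by
  obtain ⟨⟨hsym, hout⟩, heven⟩ := hw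
  have hcast : ((n + 1 : ℕ) : ℤ) = (n : ℤ) + 1 := by push_cast; ring
  have hfix' : w (-((n : ℤ) + 1)) = -((n : ℤ) + 1) := by rw [hsym, hfix]
  refine ⟨⟨hsym, ?_⟩, ?_⟩
  · intro i hi
    rcases eq_or_ne i ((n : ℤ) + 1) with h | h
    · rw [h]; exact hfix
    rcases eq_or_ne i (-((n : ℤ) + 1)) with h' | h'
    · rw [h']; exact hfix'
    apply hout
    rw [hcast]
    rw [lt_abs] at hi ⊢
    omega
  · have hset : (Finset.Icc (1 : ℤ) ((n + 1 : ℕ) : ℤ)).filter (fun i => w i < 0)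
        = (Finset.Icc (1 : ℤ) ((n : ℕ) : ℤ)).filter (fun i => w i < 0) := by
      ext x
      simp only [Finset.mem_filter, Finset.mem_Icc, hcast]
      constructor
      · rintro ⟨⟨h1, h2⟩, h3⟩
        refine ⟨⟨h1, ?_⟩, h3⟩
        rcases eq_or_ne x ((n : ℤ) + 1) with h | h
        · rw [h, hfix] at h3; omega
        · omega
      · rintro ⟨⟨h1, h2⟩, h3⟩
        exact ⟨⟨h1, by omega⟩, h3⟩
    rw [hset] at heven
    exact heven

private lemma step_fix {n : ℕ} {w : Equiv.Perm ℤ} (hw : IsEvenSignedPerm (n + 1) w) {a : ℤ}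
    (haw : w a = (n : ℤ) + 1) (h1 : a ≠ (n : ℤ) + 1) (h2 : a ≠ -((n : ℤ) + 1)) :
    ∃ t : Equiv.Perm ℤ, ∃ c : ℕ, IsDTransp (n + 1) t c ∧ IsEvenSignedPerm (n + 1) (w * t) ∧
      (w * t) ((n : ℤ) + 1) = (n : ℤ) + 1 := by
  set N : ℤ := (n : ℤ) + 1 with hN
  have hcast : ((n + 1 : ℕ) : ℤ) = N := by push_cast; omega
  have ha0 : a ≠ 0 := by
    intro h
    rw [h, signed_zero hw.1] at haw
    omega
  have haN : |a| ≤ N := by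
    by_contra h
    push_neg at h
    have := hw.1.2 a (by rw [hcast]; exact h)
    rw [this] at haw
    rcases abs_cases a with h' | h' <;> omega
  have hNne : N ≠ 0 := by omega
  have haNne : a ≠ N := h1
  have hNnega : N ≠ -a := by omega
  set t : Equiv.Perm ℤ := Equiv.swap a N * Equiv.swap (-a) (-N) with htdef
  have hdt : IsDTransp (n + 1) t (a - N).natAbs := by
    refine ⟨a, N, ha0, hNne, by rw [hcast]; exact haN, by rw [hcast, abs_of_pos (by omega)],
      haNne, hNnega, htdef, rfl⟩
  have htap : ∀ k, t k =
      if k = a then N else if k = N then a else if k = -a then -N else if k = -N then -a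
      else k := fun k => by rw [htdef]; exact dt_apply a N ha0 hNne haNne hNnega k
  refine ⟨t, (a - N).natAbs, hdt, even_mul_dt hw hdt, ?_⟩
  have htN : t N = a := by rw [htap]; split_ifs <;> omega
  simp only [Equiv.Perm.mul_apply, htN, haw]

private lemma exists_fact : ∀ n : ℕ, ∀ w : Equiv.Perm ℤ, IsEvenSignedPerm n w →
    ∃ L : List (Equiv.Perm ℤ × ℕ),
      (∀ p ∈ L, IsDTransp n p.1 p.2) ∧ (L.map Prod.fst).prod = w := by
  intro n
  induction n with
  | zero =>
    intro w hw
    refine ⟨[], by simp, ?_⟩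
    simp only [List.map_nil, List.prod_nil]
    ext k
    rcases eq_or_ne k 0 with h | h
    · rw [h]
      simp [signed_zero hw.1]
    · have := hw.1.2 k (by simpa using abs_pos.2 h)
      simp [this]
  | succ n IH =>
    intro w hw
    set N : ℤ := (n : ℤ) + 1 with hN
    have hcast : ((n + 1 : ℕ) : ℤ) = N := by push_cast; omega
    have hsq : ∀ {t : Equiv.Perm ℤ} {c : ℕ}, IsDTransp (n + 1) t c →
        ∀ x : Equiv.Perm ℤ, t * (t * x) = x := by
      intro t c ht x
      rw [← mul_assoc, dt_sq ht, one_mul]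
    by_cases hfix : w N = N
    · obtain ⟨L, hL, hprod⟩ := IH w (fix_reduce hw hfix)
      exact ⟨L, fun p hp => dt_mono (hL p hp), hprod⟩
    · set a : ℤ := w⁻¹ N with ha
      have haw : w a = N := w.apply_inv_self N
      have haN : a ≠ N := by
        intro h
        rw [h] at haw
        exact hfix haw
      by_cases h2 : a = -N
      · -- w N = -N; find another negative b
        have hwN : w N = -N := by
          have := hw.1.1 N
          rw [h2] at haw
          omega
        have hNmem : N ∈ (Finset.Icc (1 : ℤ) ((n + 1 : ℕ) : ℤ)).filter (fun i => w i < 0) := by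
          rw [Finset.mem_filter, Finset.mem_Icc, hcast, hwN]
          omega
        have hlt : 1 < ((Finset.Icc (1 : ℤ) ((n + 1 : ℕ) : ℤ)).filter
            (fun i => w i < 0)).card := by
          obtain ⟨k, hk⟩ := hw.2
          have : 0 < ((Finset.Icc (1 : ℤ) ((n + 1 : ℕ) : ℤ)).filter
              (fun i => w i < 0)).card := Finset.card_pos.2 ⟨N, hNmem⟩
          omega
        obtain ⟨b, hbmem, hbne⟩ := Finset.exists_mem_ne hlt N
        rw [Finset.mem_filter, Finset.mem_Icc, hcast] at hbmem
        obtain ⟨⟨hb1, hb2⟩, hb3⟩ := hbmem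
        -- t1 = (b N)(-b -N)
        have hb0 : b ≠ 0 := by omega
        have hdt1 : IsDTransp (n + 1) (Equiv.swap b N * Equiv.swap (-b) (-N)) (b - N).natAbs := by
          refine ⟨b, N, hb0, by omega, ?_, ?_, hbne, by omega, rfl, rfl⟩
          · rw [hcast, abs_of_pos (by omega)]; omega
          · rw [hcast, abs_of_pos (by omega)]
        set t1 : Equiv.Perm ℤ := Equiv.swap b N * Equiv.swap (-b) (-N) with ht1def
        have htap1 : ∀ k, t1 k =
            if k = b then N else if k = N then b else if k = -b then -N else if k = -N then -b
            else k := fun k => by rw [ht1def]; exact dt_apply b N hb0 (by omega) hbne (by omega) k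
        set w1 : Equiv.Perm ℤ := w * t1 with hw1def
        have hw1 : IsEvenSignedPerm (n + 1) w1 := even_mul_dt hw hdt1
        have hw1a : w1 (-b) = N := by
          have h1 : t1 (-b) = -N := by rw [htap1]; split_ifs <;> omega
          rw [hw1def]
          simp only [Equiv.Perm.mul_apply, h1]
          have := hw.1.1 N
          rw [h2] at haw
          omega
        obtain ⟨t2, c2, hdt2, hw2, hw2fix⟩ := step_fix hw1 hw1a (by omega) (by omega)
        obtain ⟨L, hL, hprod⟩ := IH (w1 * t2) (fix_reduce hw2 hw2fix)
        refine ⟨L ++ [(t2, c2), (t1, (b - N).natAbs)], ?_, ?_⟩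
        · intro p hp
          rcases List.mem_append.1 hp with h | h
          · exact dt_mono (hL p h)
          · simp only [List.mem_cons, List.mem_singleton, List.not_mem_nil, or_false] at h
            rcases h with h | h
            · rw [h]; exact hdt2
            · rw [h]; exact hdt1
        · simp only [List.map_append, List.prod_append, List.map_cons, List.prod_cons,
            List.map_nil, List.prod_nil, hprod]
          rw [hw1def]
          calc (w * t1 * t2) * (t2 * (t1 * 1)) = w * t1 * (t2 * (t2 * (t1 * 1))) := by
                rw [mul_assoc]
            _ = w * t1 * (t1 * 1) := by rw [hsq hdt2]
            _ = w * (t1 * (t1 * 1)) := by rw [mul_assoc]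
            _ = w * 1 := by rw [hsq hdt1]
            _ = w := mul_one w
      · obtain ⟨t, c, hdt, hwt, hwtfix⟩ := step_fix hw haw haN h2
        obtain ⟨L, hL, hprod⟩ := IH (w * t) (fix_reduce hwt hwtfix)
        refine ⟨L ++ [(t, c)], ?_, ?_⟩
        · intro p hp
          rcases List.mem_append.1 hp with h | h
          · exact dt_mono (hL p h)
          · simp only [List.mem_singleton] at h
            rw [h]
            exact hdt
        · simp only [List.map_append, List.prod_append, List.map_cons, List.prod_cons,
            List.map_nil, List.prod_nil, hprod]
          calc (w * t) * (t * 1) = w * (t * (t * 1)) := by rw [mul_assoc]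
            _ = w * 1 := by rw [hsq hdt]
            _ = w := mul_one w

end Aux

/-- For every even-signed permutation `w ∈ S^D_n`, the cost of `w` (computed with
factorizations into transpositions of `S^D_n`) is at least half of its total
displacement: `$(w) ≥ tvd(w)/2`. -/
theorem cost_ge_half_tvd_typeD (n : ℕ) (w : Equiv.Perm ℤ) (hw : IsEvenSignedPerm n w) :
    tvdB n w ≤ 2 * costD n w := by
  obtain ⟨L, hL, hprod⟩ := exists_fact n w hw
  have hne : {c : ℕ | ∃ L : List (Equiv.Perm ℤ × ℕ),
      (∀ p ∈ L, IsDTransp n p.1 p.2) ∧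
      (L.map Prod.fst).prod = w ∧ c = (L.map Prod.snd).sum}.Nonempty :=
    ⟨(L.map Prod.snd).sum, L, hL, hprod, rfl⟩
  have hmem := Nat.sInf_mem hne
  obtain ⟨L', hL', hprod', hc⟩ := hmem
  have h := (fact_tvd L' hL').2
  rw [hprod'] at h
  rw [costD, ← hc] at *
  exact h
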